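/- The algebra H^dif = ℂ⟨a_1, a_2, ...⟩ of noncommutative polynomials, equipped with the coproduct Δ(a_n) = 1 ⊗ a_n + a_n ⊗ 1 + Σ_{m=1}^{n-1} Q^{n-m}_m(a) ⊗ a_{n-m} (extended as an algebra morphism), is a coassociative bialgebra: (Δ ⊗ id)∘Δ = (id ⊗ Δ)∘Δ. -/

import Mathlib

open scoped TensorProduct

/-- The free associative unital `ℂ`-algebra `ℂ⟨a_1, a_2, ...⟩`
(the generator of index `0` is unused; `a_n = ι n` for `n ≥ 1`). -/
abbrev Hdif : Type := FreeAlgebra ℂ ℕ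

/-- The generators `a_n`. -/
noncomputable def gen : ℕ → Hdif := FreeAlgebra.ι ℂ

/-- The noncommutative symmetric polynomial
`P_m^{(k)}(a) = Σ_{j_1+···+j_k = m, j_i ≥ 1} a_{j_1}···a_{j_k}`. -/
noncomputable def Pp {A : Type*} [Ring A] (a : ℕ → A) (k m : ℕ) : A :=
  ∑ j : Fin k → Fin (m + 1),
    if (∀ i, 1 ≤ (j i : ℕ)) ∧ (∑ i, (j i : ℕ)) = m then
      (List.ofFn fun i => a ((j i : ℕ))).prod
    else 0

/-- `Q^l_m(a) = Σ_{k=1}^m C(l+1,k) P^{(k)}_m(a)`, with `C(l+1,k) = 0` for `k > l+1`. -/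
noncomputable def Qp {A : Type*} [Ring A] (a : ℕ → A) (l m : ℕ) : A :=
  ∑ k ∈ Finset.Icc 1 m, ((l + 1).choose k) • Pp a k m

/-- The coproduct `Δ : H^dif → H^dif ⊗ H^dif`, the unique algebra morphism with
`Δ(a_n) = 1 ⊗ a_n + a_n ⊗ 1 + Σ_{m=1}^{n-1} Q^{n-m}_m(a) ⊗ a_{n-m}`. -/
noncomputable def Δdif : Hdif →ₐ[ℂ] Hdif ⊗[ℂ] Hdif :=
  FreeAlgebra.lift ℂ fun n =>
    1 ⊗ₜ[ℂ] gen n + gen n ⊗ₜ[ℂ] 1 +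
      ∑ m ∈ Finset.Icc 1 (n - 1), Qp gen (n - m) m ⊗ₜ[ℂ] gen (n - m)


section Aux
open PowerSeries Finset
variable {A : Type*} [Ring A] (a : ℕ → A)

theorem Pp_zero (m : ℕ) : Pp a 0 m = if m = 0 then 1 else 0 := by
  simp [Pp, eq_comm]

theorem Pp_wide (k u M : ℕ) (h : u ≤ M) :
    Pp a k u = ∑ j : Fin k → Fin (M + 1),
      if (∀ i, 1 ≤ (j i : ℕ)) ∧ (∑ i, (j i : ℕ)) = u then
        (List.ofFn fun i => a ((j i : ℕ))).prod else 0 := by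
  rw [Pp]
  rw [← Finset.sum_filter_of_ne
    (p := fun j : Fin k → Fin (M + 1) => ∀ i, (j i : ℕ) ≤ u)
    (by
      intro x _ hx i
      by_cases hc : (∀ i, 1 ≤ (x i : ℕ)) ∧ (∑ i, (x i : ℕ)) = u
      · calc (x i : ℕ) ≤ ∑ t, (x t : ℕ) := Finset.single_le_sum (f := fun t => (x t : ℕ)) (fun t _ => Nat.zero_le _) (Finset.mem_univ i)
        _ = u := hc.2
      · simp [hc] at hx)]
  refine Finset.sum_nbij'
    (i := fun (j : Fin k → Fin (u + 1)) => fun t => (Fin.castLE (by omega) (j t) : Fin (M + 1)))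
    (j := fun (g : Fin k → Fin (M + 1)) => fun t => (⟨min (g t : ℕ) u, by omega⟩ : Fin (u + 1)))
    ?_ ?_ ?_ ?_ ?_
  · intro j _
    simp only [Finset.mem_filter, Finset.mem_univ, true_and]
    intro i; simp [Fin.is_le]
  · intro g _; exact Finset.mem_univ _
  · intro j _; funext t; ext; simp [Nat.min_eq_left (Fin.is_le _)]
  · intro g hg
    simp only [Finset.mem_filter, Finset.mem_univ, true_and] at hg
    funext t; ext; simp [Nat.min_eq_left (hg t)]
  · intro j _; simp


theorem Pp_succ (k m : ℕ) :
    Pp a (k + 1) m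
      = ∑ u ∈ Finset.range (m + 1), Pp a k u * (if m - u = 0 then 0 else a (m - u)) := by
  rw [Pp]
  rw [show (∑ j : Fin (k + 1) → Fin (m + 1),
        if (∀ i, 1 ≤ (j i : ℕ)) ∧ (∑ i, (j i : ℕ)) = m then
          (List.ofFn fun i => a ((j i : ℕ))).prod else 0)
      = ∑ p : Fin (m + 1) × (Fin k → Fin (m + 1)),
        (if (∀ i, 1 ≤ ((Fin.snoc p.2 p.1 : Fin (k + 1) → Fin (m + 1)) i : ℕ)) ∧
            (∑ i, ((Fin.snoc p.2 p.1 : Fin (k + 1) → Fin (m + 1)) i : ℕ)) = m then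
          (List.ofFn fun i => a (((Fin.snoc p.2 p.1 : Fin (k + 1) → Fin (m + 1)) i : ℕ))).prod
         else 0) from
    (Fintype.sum_equiv (Fin.snocEquiv fun _ => Fin (m + 1)) _ _ fun p => rfl).symm]
  rw [Fintype.sum_prod_type]
  have key : ∀ e : Fin (m + 1),
      (∑ r : Fin k → Fin (m + 1),
        (if (∀ i, 1 ≤ ((Fin.snoc r e : Fin (k + 1) → Fin (m + 1)) i : ℕ)) ∧
            (∑ i, ((Fin.snoc r e : Fin (k + 1) → Fin (m + 1)) i : ℕ)) = m then
          (List.ofFn fun i => a (((Fin.snoc r e : Fin (k + 1) → Fin (m + 1)) i : ℕ))).prod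
         else 0))
      = Pp a k (m - (e : ℕ)) * (if (e : ℕ) = 0 then 0 else a (e : ℕ)) := by
    intro e
    by_cases he : (e : ℕ) = 0
    · rw [he, if_pos rfl, mul_zero]
      apply Finset.sum_eq_zero
      intro r _
      rw [if_neg]
      rintro ⟨h1, -⟩
      have := h1 (Fin.last k)
      rw [Fin.snoc_last] at this
      omega
    · rw [if_neg he]
      have he' : 1 ≤ (e : ℕ) := by omega
      have hle : (e : ℕ) ≤ m := Fin.is_le e
      rw [Pp_wide a k (m - (e : ℕ)) m (by omega), Finset.sum_mul]
      apply Finset.sum_congr rfl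
      intro r _
      have hA : (∀ i : Fin (k + 1), 1 ≤ ((Fin.snoc r e : Fin (k + 1) → Fin (m + 1)) i : ℕ)) ↔
          ((∀ i : Fin k, 1 ≤ (r i : ℕ)) ∧ 1 ≤ (e : ℕ)) := by
        rw [Fin.forall_fin_succ']
        simp
      have hB : (∑ i : Fin (k + 1), ((Fin.snoc r e : Fin (k + 1) → Fin (m + 1)) i : ℕ))
          = (∑ i, (r i : ℕ)) + (e : ℕ) := by
        rw [Fin.sum_univ_castSucc]
        simp
      have hC : (List.ofFn fun i => a (((Fin.snoc r e : Fin (k + 1) → Fin (m + 1)) i : ℕ))).prod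
          = (List.ofFn fun i => a ((r i : ℕ))).prod * a (e : ℕ) := by
        rw [List.ofFn_succ']
        simp
      by_cases hc : (∀ i : Fin k, 1 ≤ (r i : ℕ)) ∧ (∑ i, (r i : ℕ)) = m - (e : ℕ)
      · have hc2 := hc.2
        rw [if_pos ⟨hA.mpr ⟨hc.1, he'⟩, by rw [hB]; omega⟩, if_pos hc, hC]
      · have hn : ¬((∀ i : Fin (k + 1), 1 ≤ ((Fin.snoc r e : Fin (k + 1) → Fin (m + 1)) i : ℕ)) ∧
            (∑ i, ((Fin.snoc r e : Fin (k + 1) → Fin (m + 1)) i : ℕ)) = m) := by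
          rintro ⟨h1, h2⟩
          rw [hB] at h2
          exact hc ⟨(hA.mp h1).1, by omega⟩
        rw [if_neg hn, if_neg hc, zero_mul]
  rw [Finset.sum_congr rfl fun e _ => key e]
  rw [Fin.sum_univ_eq_sum_range (fun e => Pp a k (m - e) * (if e = 0 then 0 else a e)) (m + 1)]
  rw [← Finset.sum_range_reflect]
  apply Finset.sum_congr rfl
  intro u hu
  simp only [Finset.mem_range] at hu
  have h1 : m + 1 - 1 - u = m - u := by omega
  have h2 : m - (m - u) = u := by omega
  rw [h1, h2]


theorem Pp_eq_zero_of_lt {A : Type*} [Ring A] (a : ℕ → A) {k m : ℕ} (h : m < k) :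
    Pp a k m = 0 := by
  apply Finset.sum_eq_zero
  intro j _
  rw [if_neg]
  rintro ⟨h1, h2⟩
  have : (k : ℕ) ≤ ∑ i, (j i : ℕ) := by
    calc (k : ℕ) = ∑ _i : Fin k, 1 := by simp
    _ ≤ _ := Finset.sum_le_sum fun i _ => h1 i
  omega

noncomputable def a0 : ℕ → Hdif := fun n => if n = 0 then 0 else gen n
noncomputable def ap : ℕ → Hdif := fun n => if n = 0 then 1 else gen n
noncomputable def gg : PowerSeries Hdif := PowerSeries.mk a0
noncomputable def ff : PowerSeries Hdif := PowerSeries.mk ap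
noncomputable def Cc (l m : ℕ) : Hdif := PowerSeries.coeff m (ff ^ (l + 1))

theorem coeff_pow_succ {R : Type*} [Ring R] (p : PowerSeries R) (k m : ℕ) :
    PowerSeries.coeff m (p ^ (k + 1))
      = ∑ u ∈ range (m + 1), PowerSeries.coeff u (p ^ k) * PowerSeries.coeff (m - u) p := by
  rw [pow_succ, PowerSeries.coeff_mul]
  exact Finset.Nat.sum_antidiagonal_eq_sum_range_succ
    (f := fun a b => PowerSeries.coeff a (p ^ k) * PowerSeries.coeff b p) m

theorem coeff_gg_pow (k m : ℕ) : PowerSeries.coeff m (gg ^ k) = Pp gen k m := by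
  induction k generalizing m with
  | zero => rw [pow_zero, PowerSeries.coeff_one, Pp_zero]
  | succ k ih =>
      rw [coeff_pow_succ, Pp_succ]
      apply Finset.sum_congr rfl
      intro u _
      rw [ih]
      congr 1
      simp [gg, a0]

theorem ff_eq : ff = 1 + gg := by
  ext n
  simp only [ff, gg, map_add, PowerSeries.coeff_mk, PowerSeries.coeff_one, ap, a0]
  by_cases h : n = 0 <;> simp [h]

theorem Qp_eq_Cc (l m : ℕ) (hm : 1 ≤ m) : Qp gen l m = Cc l m := by
  have h1 : Cc l m = ∑ k ∈ range (l + 2), ((l + 1).choose k) • Pp gen k m := by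
    rw [Cc, ff_eq, add_comm, (Commute.one_right gg).add_pow, map_sum]
    apply Finset.sum_congr rfl
    intro k _
    rw [one_pow, mul_one, (Nat.cast_commute ((l + 1).choose k) (gg ^ k)).symm.eq,
      ← nsmul_eq_mul, map_nsmul, coeff_gg_pow]
  set f : ℕ → Hdif := fun k => ((l + 1).choose k) • Pp gen k m with hf
  set N := max m (l + 1) with hN
  have h2 : ∑ k ∈ range (l + 2), f k = ∑ k ∈ range (N + 2), f k := by
    apply Finset.sum_subset
    · intro x hx
      simp only [mem_range] at hx ⊢
      omega
    · intro x _ hx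
      simp only [mem_range] at hx
      have : l + 1 < x := by omega
      simp [hf, Nat.choose_eq_zero_of_lt this]
  have h3 : ∑ k ∈ Finset.Icc 1 m, f k = ∑ k ∈ Finset.Icc 1 (N + 1), f k := by
    apply Finset.sum_subset
    · intro x hx
      simp only [Finset.mem_Icc] at hx ⊢
      omega
    · intro x hx hx'
      simp only [Finset.mem_Icc] at hx hx'
      have : m < x := by omega
      simp [hf, Pp_eq_zero_of_lt gen this]
  have h4 : ∑ k ∈ range (N + 2), f k = f 0 + ∑ k ∈ range (N + 1), f (k + 1) := by
    rw [Finset.sum_range_succ' f (N + 1), add_comm]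
  have h5 : ∑ k ∈ Finset.Icc 1 (N + 1), f k = ∑ k ∈ range (N + 1), f (k + 1) := by
    refine (Finset.sum_nbij' (i := fun k => k - 1) (j := fun k => k + 1) ?_ ?_ ?_ ?_ ?_)
    · intro x hx; simp only [Finset.mem_Icc] at hx; simp only [mem_range]; omega
    · intro x hx; simp only [mem_range] at hx; simp only [Finset.mem_Icc]; omega
    · intro x hx; simp only [Finset.mem_Icc] at hx; omega
    · intro x hx; simp only [mem_range] at hx; omega
    · intro x hx; simp only [Finset.mem_Icc] at hx
      congr 1
      omega
  have h6 : f 0 = 0 := by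
    have : ¬ m = 0 := by omega
    simp [hf, Pp_zero, this]
  rw [Qp, h1, h2, h3, h4, h5, h6, zero_add]

theorem Cc_zero_right (l : ℕ) : Cc l 0 = 1 := by
  rw [Cc, PowerSeries.coeff_zero_eq_constantCoeff, map_pow]
  have : constantCoeff ff = 1 := by simp [ff, constantCoeff_mk, ap]
  rw [this, one_pow]

theorem Cc_zero_left (m : ℕ) : Cc 0 m = ap m := by
  rw [Cc, pow_one, ff, PowerSeries.coeff_mk]

theorem triangle_reindex {M : Type*} [AddCommMonoid M] (m : ℕ) (F G : ℕ → ℕ → ℕ → M)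
    (h : ∀ u s q, s ≤ u → u ≤ m → q ≤ m - u → F u s q = G (s + q) s (u - s)) :
    (∑ u ∈ range (m + 1), ∑ s ∈ range (u + 1), ∑ q ∈ range (m - u + 1), F u s q)
      = ∑ t ∈ range (m + 1), ∑ s ∈ range (t + 1), ∑ v ∈ range (m - t + 1), G t s v := by
  rw [Finset.sum_sigma' (range (m + 1)) (fun u => range (u + 1))
      (fun u s => ∑ q ∈ range (m - u + 1), F u s q),
    Finset.sum_sigma' (range (m + 1)) (fun t => range (t + 1))
      (fun t s => ∑ v ∈ range (m - t + 1), G t s v),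
    Finset.sum_sigma' ((range (m + 1)).sigma fun u => range (u + 1))
      (fun p => range (m - p.1 + 1)) (fun p q => F p.1 p.2 q),
    Finset.sum_sigma' ((range (m + 1)).sigma fun t => range (t + 1))
      (fun p => range (m - p.1 + 1)) (fun p v => G p.1 p.2 v)]
  refine Finset.sum_nbij'
    (i := fun x => ⟨⟨x.1.2 + x.2, x.1.2⟩, x.1.1 - x.1.2⟩)
    (j := fun x => ⟨⟨x.1.2 + x.2, x.1.2⟩, x.1.1 - x.1.2⟩) ?_ ?_ ?_ ?_ ?_
  · rintro ⟨⟨u, s⟩, q⟩ hx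
    simp only [Finset.mem_sigma, mem_range] at hx ⊢
    omega
  · rintro ⟨⟨t, s⟩, v⟩ hx
    simp only [Finset.mem_sigma, mem_range] at hx ⊢
    omega
  · rintro ⟨⟨u, s⟩, q⟩ hx
    simp only [Finset.mem_sigma, mem_range] at hx
    obtain ⟨⟨h1, h2⟩, h3⟩ := hx
    dsimp only
    congr 1 <;> try omega
    · congr 1 <;> omega
  · rintro ⟨⟨t, s⟩, v⟩ hx
    simp only [Finset.mem_sigma, mem_range] at hx
    obtain ⟨⟨h1, h2⟩, h3⟩ := hx
    dsimp only
    congr 1 <;> try omega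
    · congr 1 <;> omega
  · rintro ⟨⟨u, s⟩, q⟩ hx
    simp only [Finset.mem_sigma, mem_range] at hx
    obtain ⟨⟨h1, h2⟩, h3⟩ := hx
    dsimp only
    exact h u s q (by omega) (by omega) (by omega)

theorem dA (n : ℕ) : Δdif (ap n) = ∑ p ∈ range (n + 1), Cc p (n - p) ⊗ₜ[ℂ] ap p := by
  rcases Nat.eq_zero_or_pos n with h0 | hn
  · subst h0
    have h1 : ap 0 = 1 := by rw [ap]; simp
    rw [h1, map_one, range_one, Finset.sum_singleton, Nat.sub_zero, Cc_zero_right, h1,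
      Algebra.TensorProduct.one_def]
  · have hap : ap n = gen n := by
      rw [ap, if_neg (by omega)]
    rw [hap]
    have hlift : Δdif (gen n) = 1 ⊗ₜ[ℂ] gen n + gen n ⊗ₜ[ℂ] 1 +
        ∑ m ∈ Finset.Icc 1 (n - 1), Qp gen (n - m) m ⊗ₜ[ℂ] gen (n - m) := by
      rw [Δdif, gen, FreeAlgebra.lift_ι_apply]
    rw [hlift]
    rw [Finset.sum_range_succ' (fun p => Cc p (n - p) ⊗ₜ[ℂ] ap p) n]
    obtain ⟨n', rfl⟩ : ∃ n', n = n' + 1 := ⟨n - 1, by omega⟩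
    rw [Finset.sum_range_succ (fun i => Cc (i + 1) (n' + 1 - (i + 1)) ⊗ₜ[ℂ] ap (i + 1)) n']
    have hT : Cc (n' + 1) (n' + 1 - (n' + 1)) ⊗ₜ[ℂ] ap (n' + 1) = 1 ⊗ₜ[ℂ] gen (n' + 1) := by
      rw [Nat.sub_self, Cc_zero_right, ap, if_neg (by omega)]
    have hU : Cc 0 (n' + 1 - 0) ⊗ₜ[ℂ] ap 0 = gen (n' + 1) ⊗ₜ[ℂ] 1 := by
      rw [Nat.sub_zero, Cc_zero_left, ap, if_neg (by omega), ap, if_pos rfl]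
    have hS : (∑ i ∈ range n', Cc (i + 1) (n' + 1 - (i + 1)) ⊗ₜ[ℂ] ap (i + 1))
        = ∑ m ∈ Finset.Icc 1 (n' + 1 - 1), Qp gen (n' + 1 - m) m ⊗ₜ[ℂ] gen (n' + 1 - m) := by
      refine Finset.sum_nbij' (i := fun i => n' - i) (j := fun m => n' - m) ?_ ?_ ?_ ?_ ?_
      · intro x hx; simp only [mem_range] at hx; simp only [Finset.mem_Icc]; omega
      · intro x hx; simp only [Finset.mem_Icc] at hx; simp only [mem_range]; omega
      · intro x hx; simp only [mem_range] at hx; omega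
      · intro x hx; simp only [Finset.mem_Icc] at hx; omega
      · intro x hx; simp only [mem_range] at hx
        have e1 : n' + 1 - (n' - x) = x + 1 := by omega
        have e2 : n' + 1 - (x + 1) = n' - x := by omega
        rw [e1, e2, Qp_eq_Cc _ _ (by omega), ap, if_neg (by omega)]
    rw [hT, hU, hS]
    abel

theorem coeff_mul_range {R : Type*} [Ring R] (p q : PowerSeries R) (d : ℕ) :
    PowerSeries.coeff d (p * q)
      = ∑ v ∈ range (d + 1), PowerSeries.coeff v p * PowerSeries.coeff (d - v) q := by
  rw [PowerSeries.coeff_mul]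
  exact Finset.Nat.sum_antidiagonal_eq_sum_range_succ
    (f := fun a b => PowerSeries.coeff a p * PowerSeries.coeff b q) d

theorem Cc_succ (l t : ℕ) : Cc (l + 1) t = ∑ s ∈ range (t + 1), Cc l s * ap (t - s) := by
  rw [Cc, coeff_pow_succ]
  apply Finset.sum_congr rfl
  intro u _
  rw [ff, PowerSeries.coeff_mk]
  rfl

theorem Cc_split {s t : ℕ} (h : s ≤ t) (l d : ℕ) :
    Cc (t + l + 1) d = ∑ v ∈ range (d + 1), Cc (s + l) v * Cc (t - s) (d - v) := by
  have hp : ff ^ (t + l + 1 + 1) = ff ^ (s + l + 1) * ff ^ (t - s + 1) := by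
    rw [← pow_add]
    congr 1
    omega
  rw [Cc, hp, coeff_mul_range]
  rfl

noncomputable def WW : PowerSeries (Hdif ⊗[ℂ] Hdif) := PowerSeries.mk fun n => Δdif (ap n)

theorem coeff_WW_pow (l m : ℕ) :
    PowerSeries.coeff m (WW ^ (l + 1))
      = ∑ s ∈ range (m + 1), Cc (s + l) (m - s) ⊗ₜ[ℂ] Cc l s := by
  induction l generalizing m with
  | zero =>
      rw [pow_one, WW, PowerSeries.coeff_mk, dA]
      apply Finset.sum_congr rfl
      intro p _
      rw [Nat.add_zero]
      congr 1
      rw [Cc, pow_one, ff, PowerSeries.coeff_mk]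
  | succ l ih =>
      rw [coeff_pow_succ]
      have step1 : ∀ u ∈ range (m + 1),
          PowerSeries.coeff u (WW ^ (l + 1)) * PowerSeries.coeff (m - u) WW
            = ∑ s ∈ range (u + 1), ∑ q ∈ range (m - u + 1),
                (Cc (s + l) (u - s) * Cc q (m - u - q)) ⊗ₜ[ℂ] (Cc l s * ap q) := by
        intro u _
        rw [ih, WW, PowerSeries.coeff_mk, dA, Finset.sum_mul]
        apply Finset.sum_congr rfl
        intro s _
        rw [Finset.mul_sum]
        apply Finset.sum_congr rfl
        intro q _
        rw [Algebra.TensorProduct.tmul_mul_tmul]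
      rw [Finset.sum_congr rfl step1]
      have step2 : ∀ t ∈ range (m + 1),
          Cc (t + (l + 1)) (m - t) ⊗ₜ[ℂ] Cc (l + 1) t
            = ∑ s ∈ range (t + 1), ∑ v ∈ range (m - t + 1),
                (Cc (s + l) v * Cc (t - s) (m - t - v)) ⊗ₜ[ℂ] (Cc l s * ap (t - s)) := by
        intro t _
        rw [Cc_succ, TensorProduct.tmul_sum]
        apply Finset.sum_congr rfl
        intro s hs
        simp only [mem_range] at hs
        rw [show t + (l + 1) = t + l + 1 from by omega, Cc_split (show s ≤ t from by omega) l,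
          TensorProduct.sum_tmul]
      rw [Finset.sum_congr rfl step2]
      exact triangle_reindex m _ _ (by
        intro u s q hsu hum hq
        have e1 : s + q - s = q := by omega
        have e2 : m - (s + q) - (u - s) = m - u - q := by omega
        rw [e1, e2])

theorem map_ff : PowerSeries.map (Δdif : Hdif →+* Hdif ⊗[ℂ] Hdif) ff = WW := by
  ext n
  rw [PowerSeries.coeff_map, ff, PowerSeries.coeff_mk, WW, PowerSeries.coeff_mk]
  rfl

theorem L1 (l m : ℕ) :
    Δdif (Cc l m) = ∑ s ∈ range (m + 1), Cc (s + l) (m - s) ⊗ₜ[ℂ] Cc l s := by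
  have h : Δdif (Cc l m) = PowerSeries.coeff m (WW ^ (l + 1)) := by
    rw [← map_ff, ← map_pow, PowerSeries.coeff_map, Cc]
    rfl
  rw [h, coeff_WW_pow]

theorem triangle_reindex2 {M : Type*} [AddCommMonoid M] (n : ℕ) (F G : ℕ → ℕ → M)
    (h : ∀ p s, p ≤ n → s ≤ n - p → F p s = G (p + s) p) :
    (∑ p ∈ range (n + 1), ∑ s ∈ range (n - p + 1), F p s)
      = ∑ t ∈ range (n + 1), ∑ q ∈ range (t + 1), G t q := by
  rw [Finset.sum_sigma' (range (n + 1)) (fun p => range (n - p + 1)) (fun p s => F p s),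
    Finset.sum_sigma' (range (n + 1)) (fun t => range (t + 1)) (fun t q => G t q)]
  refine Finset.sum_nbij'
    (i := fun x => ⟨x.1 + x.2, x.1⟩)
    (j := fun x => ⟨x.2, x.1 - x.2⟩) ?_ ?_ ?_ ?_ ?_
  · rintro ⟨p, s⟩ hx
    simp only [Finset.mem_sigma, mem_range] at hx ⊢
    omega
  · rintro ⟨t, q⟩ hx
    simp only [Finset.mem_sigma, mem_range] at hx ⊢
    omega
  · rintro ⟨p, s⟩ hx
    simp only [Finset.mem_sigma, mem_range] at hx
    dsimp only
    congr 1
    omega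
  · rintro ⟨t, q⟩ hx
    simp only [Finset.mem_sigma, mem_range] at hx
    dsimp only
    congr 1
    omega
  · rintro ⟨p, s⟩ hx
    simp only [Finset.mem_sigma, mem_range] at hx
    exact h p s (by omega) (by omega)

theorem coassoc_ap (n : ℕ) :
    (Algebra.TensorProduct.assoc ℂ ℂ ℂ Hdif Hdif Hdif)
        ((Algebra.TensorProduct.map Δdif (AlgHom.id ℂ Hdif)) (Δdif (ap n))) =
      (Algebra.TensorProduct.map (AlgHom.id ℂ Hdif) Δdif) (Δdif (ap n)) := by
  rw [dA n, map_sum, map_sum, map_sum]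
  have lhs : ∀ p ∈ range (n + 1),
      (Algebra.TensorProduct.assoc ℂ ℂ ℂ Hdif Hdif Hdif)
          ((Algebra.TensorProduct.map Δdif (AlgHom.id ℂ Hdif)) (Cc p (n - p) ⊗ₜ[ℂ] ap p))
        = ∑ s ∈ range (n - p + 1), Cc (s + p) (n - p - s) ⊗ₜ[ℂ] (Cc p s ⊗ₜ[ℂ] ap p) := by
    intro p _
    rw [Algebra.TensorProduct.map_tmul, AlgHom.coe_id, id_eq, L1, TensorProduct.sum_tmul,
      map_sum]
    apply Finset.sum_congr rfl
    intro s _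
    rw [Algebra.TensorProduct.assoc_tmul]
  have rhs : ∀ p ∈ range (n + 1),
      (Algebra.TensorProduct.map (AlgHom.id ℂ Hdif) Δdif) (Cc p (n - p) ⊗ₜ[ℂ] ap p)
        = ∑ q ∈ range (p + 1), Cc p (n - p) ⊗ₜ[ℂ] (Cc q (p - q) ⊗ₜ[ℂ] ap q) := by
    intro p _
    rw [Algebra.TensorProduct.map_tmul, AlgHom.coe_id, id_eq, dA, TensorProduct.tmul_sum]
  rw [Finset.sum_congr rfl lhs, Finset.sum_congr rfl rhs]
  apply triangle_reindex2 n _ _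
  intro p s hp hs
  have e1 : n - (p + s) = n - p - s := by omega
  have e2 : p + s - p = s := by omega
  rw [e1, e2, Nat.add_comm s p]


end Aux

/-- Coassociativity of the coproduct on `H^dif`:
`(Δ ⊗ id) ∘ Δ = (id ⊗ Δ) ∘ Δ` (up to the canonical associator). -/
theorem Δdif_coassoc (x : Hdif) :
    (TensorProduct.assoc ℂ Hdif Hdif Hdif)
        ((Algebra.TensorProduct.map Δdif (AlgHom.id ℂ Hdif)) (Δdif x)) =
      (Algebra.TensorProduct.map (AlgHom.id ℂ Hdif) Δdif) (Δdif x) := by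
  have hassoc : ∀ z : (Hdif ⊗[ℂ] Hdif) ⊗[ℂ] Hdif,
      (TensorProduct.assoc ℂ Hdif Hdif Hdif) z
        = (Algebra.TensorProduct.assoc ℂ ℂ ℂ Hdif Hdif Hdif) z := fun _ => rfl
  rw [hassoc]
  induction x using FreeAlgebra.induction with
  | grade0 r =>
      rw [AlgHom.commutes, AlgHom.commutes, AlgHom.commutes, AlgEquiv.commutes]
  | grade1 i =>
      rcases Nat.eq_zero_or_pos i with h0 | hi
      · subst h0
        have h : Δdif (gen 0) = 1 ⊗ₜ[ℂ] gen 0 + gen 0 ⊗ₜ[ℂ] 1 := by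
          rw [Δdif, gen, FreeAlgebra.lift_ι_apply]
          simp
        rw [show FreeAlgebra.ι ℂ (0 : ℕ) = gen 0 from rfl, h]
        simp only [map_add, Algebra.TensorProduct.map_tmul, AlgHom.coe_id, id_eq, h, map_one,
          Algebra.TensorProduct.one_def]
        rw [TensorProduct.add_tmul, TensorProduct.tmul_add, map_add,
          Algebra.TensorProduct.assoc_tmul, Algebra.TensorProduct.assoc_tmul,
          Algebra.TensorProduct.assoc_tmul]
        abel
      · have hι : FreeAlgebra.ι ℂ i = ap i := by
          rw [ap, if_neg (by omega)]
          rfl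
        rw [hι]
        exact coassoc_ap i
  | mul a b ha hb =>
      rw [map_mul, map_mul, map_mul, map_mul, ha, hb]
  | add a b ha hb =>
      rw [map_add, map_add, map_add, map_add, ha, hb]
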